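/- arXiv:2006.16770 — 4 statements merged into one kernel-verified Lean document; each statement's English description precedes it below -/
import Mathlib

section
/- Suppose u ∈ C¹[0,1] has zero mean (∫₀¹ u = 0) and u ≥ -1 on [0,1], with u not identically 0. If u satisfies the variational inequality ∫₀¹ [ε u'(v-u)' + λ³ Ẇ*((1+u)/λ)(v-u)] ds ≥ 0 for all admissible v, and the resulting Euler–Lagrange relations hold, then λ ≥ 1/M, where M > 1 is defined by Ẇ*(M) = Ẇ*(0) = γ. -/
open Set Filter

lemma evt_pos' {g : ℝ → ℝ} {c a : ℝ} (hd : HasDerivAt g c a) (h0 : g a = 0) (hc : 0 < c) :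
    ∀ᶠ x in nhdsWithin a (Set.Ioi a), 0 < g x := by
  have hs : Filter.Tendsto (slope g a) (nhdsWithin a {a}ᶜ) (nhds c) :=
    hasDerivAt_iff_tendsto_slope.1 hd
  have h1 : ∀ᶠ x in nhdsWithin a {a}ᶜ, 0 < slope g a x := hs.eventually (eventually_gt_nhds hc)
  have h2 : ∀ᶠ x in nhdsWithin a (Set.Ioi a), 0 < slope g a x :=
    h1.filter_mono (nhdsWithin_mono a (fun x hx => ne_of_gt hx))
  filter_upwards [h2, self_mem_nhdsWithin] with x hx hxa
  have hxa' : (0:ℝ) < x - a := sub_pos.2 hxa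
  have : slope g a x = g x / (x - a) := by simp [slope_def_field, h0]
  rw [this] at hx
  have := mul_pos hx hxa'
  rwa [div_mul_cancel₀ _ (ne_of_gt hxa')] at this

lemma evt_neg' {g : ℝ → ℝ} {c a : ℝ} (hd : HasDerivAt g c a) (h0 : g a = 0) (hc : 0 < c) :
    ∀ᶠ x in nhdsWithin a (Set.Iio a), g x < 0 := by
  have hs : Filter.Tendsto (slope g a) (nhdsWithin a {a}ᶜ) (nhds c) :=
    hasDerivAt_iff_tendsto_slope.1 hd
  have h1 : ∀ᶠ x in nhdsWithin a {a}ᶜ, 0 < slope g a x := hs.eventually (eventually_gt_nhds hc)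
  have h2 : ∀ᶠ x in nhdsWithin a (Set.Iio a), 0 < slope g a x :=
    h1.filter_mono (nhdsWithin_mono a (fun x hx => ne_of_lt hx))
  filter_upwards [h2, self_mem_nhdsWithin] with x hx hxa
  have hxa' : x - a < 0 := sub_neg.2 hxa
  have : slope g a x = g x / (x - a) := by simp [slope_def_field, h0]
  rw [this] at hx
  nlinarith [mul_pos hx (neg_pos.2 hxa'), div_mul_cancel₀ (g x) (ne_of_lt hxa')]

lemma second_deriv_nonpos_at_max
    (u u' u'' : ℝ → ℝ)
    (hu' : ∀ s ∈ Set.Icc (0:ℝ) 1, HasDerivAt u (u' s) s)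
    (hu'' : ∀ s ∈ Set.Icc (0:ℝ) 1, HasDerivAt u' (u'' s) s)
    (hbc0 : u' 0 = 0) (hbc1 : u' 1 = 0)
    {s : ℝ} (hs : s ∈ Set.Icc (0:ℝ) 1)
    (hmax : ∀ t ∈ Set.Icc (0:ℝ) 1, u t ≤ u s) :
    u'' s ≤ 0 := by
  by_contra h
  push_neg at h
  -- u' s = 0
  have hds : u' s = 0 := by
    rcases eq_or_lt_of_le hs.1 with h0 | h0
    · rw [← h0]; exact hbc0
    rcases eq_or_lt_of_le hs.2 with h1 | h1
    · rw [h1]; exact hbc1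
    have hloc : IsLocalMax u s := by
      have hmem : Set.Icc (0:ℝ) 1 ∈ nhds s := Icc_mem_nhds h0 h1
      exact Filter.eventually_of_mem hmem hmax
    exact hloc.hasDerivAt_eq_zero (hu' s hs)
  rcases eq_or_lt_of_le hs.2 with h1 | h1
  · -- s = 1 : u' < 0 just left of 1
    have hev := evt_neg' (hu'' s hs) hds h
    rw [eventually_iff, mem_nhdsLT_iff_exists_Ioo_subset] at hev
    obtain ⟨l, hl, hsub⟩ := hev
    have hl1 : l < s := hl
    set t : ℝ := max l 0 with ht
    have hts : t < s := max_lt hl1 (by rw [h1]; norm_num)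
    have ht0 : 0 ≤ t := le_max_right _ _
    have hanti : StrictAntiOn u (Set.Icc t s) := by
      apply strictAntiOn_of_deriv_neg (convex_Icc t s)
      · intro x hx
        exact (hu' x ⟨le_trans ht0 hx.1, le_trans hx.2 hs.2⟩).continuousAt.continuousWithinAt
      · intro x hx
        rw [interior_Icc] at hx
        have hx01 : x ∈ Set.Icc (0:ℝ) 1 := ⟨le_trans ht0 hx.1.le, le_trans hx.2.le hs.2⟩
        rw [(hu' x hx01).deriv]
        exact hsub ⟨lt_of_le_of_lt (le_max_left _ _) hx.1, hx.2⟩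
    have : u s < u t := hanti ⟨le_rfl, hts.le⟩ ⟨hts.le, le_rfl⟩ hts
    exact absurd (hmax t ⟨ht0, le_trans hts.le hs.2⟩) (not_le.2 this)
  · -- s < 1 : u' > 0 just right of s
    have hev := evt_pos' (hu'' s hs) hds h
    rw [eventually_iff, mem_nhdsGT_iff_exists_Ioo_subset] at hev
    obtain ⟨r, hr, hsub⟩ := hev
    have hsr : s < r := hr
    set t : ℝ := min r 1 with ht
    have hst : s < t := lt_min hsr h1
    have ht1 : t ≤ 1 := min_le_right _ _
    have hmono : StrictMonoOn u (Set.Icc s t) := by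
      apply strictMonoOn_of_deriv_pos (convex_Icc s t)
      · intro x hx
        exact (hu' x ⟨le_trans hs.1 hx.1, le_trans hx.2 ht1⟩).continuousAt.continuousWithinAt
      · intro x hx
        rw [interior_Icc] at hx
        have hx01 : x ∈ Set.Icc (0:ℝ) 1 := ⟨le_trans hs.1 hx.1.le, le_trans hx.2.le ht1⟩
        rw [(hu' x hx01).deriv]
        exact hsub ⟨hx.1, lt_of_lt_of_le hx.2 (min_le_left _ _)⟩
    have : u s < u t := hmono ⟨le_rfl, hst.le⟩ ⟨hst.le, le_rfl⟩ hst
    exact absurd (hmax t ⟨le_trans hs.1 hst.le, ht1⟩) (not_le.2 this)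

/-- A nontrivial equilibrium (zero-mean, `u ≥ -1`, satisfying the
Euler–Lagrange ODE `ε u'' = λ³ Ẇ*((1+u)/λ) - μ` with Neumann conditions) forces
`λ ≥ 1/M`, where `M > 1` is defined by `Ẇ*(M) = Ẇ*(0) = γ`. -/
theorem nontrivial_solution_lambda_lower_bound
    (DW : ℝ → ℝ) (κ γ M ε lam μ : ℝ)
    (hκ0 : 0 < κ) (hκ1 : κ < 1)
    (hDWc : ContinuousOn DW (Set.Ici 0))
    (hanti : StrictAntiOn DW (Set.Icc 0 κ))
    (hmono : StrictMonoOn DW (Set.Ici κ))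
    (hγ : DW 0 = γ) (hγpos : 0 < γ)
    (hM1 : 1 < M) (hMκ : κ < M) (hMγ : DW M = γ)
    (hε : 0 < ε) (hlam : 0 < lam)
    (u u' u'' : ℝ → ℝ)
    (hu' : ∀ s ∈ Set.Icc (0:ℝ) 1, HasDerivAt u (u' s) s)
    (hu'' : ∀ s ∈ Set.Icc (0:ℝ) 1, HasDerivAt u' (u'' s) s)
    (hmean : (∫ s in (0:ℝ)..1, u s) = 0)
    (hge : ∀ s ∈ Set.Icc (0:ℝ) 1, -1 ≤ u s)
    (hne : ∃ s ∈ Set.Icc (0:ℝ) 1, u s ≠ 0)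
    (hode : ∀ s ∈ Set.Icc (0:ℝ) 1, ε * u'' s = lam^3 * DW ((1 + u s)/lam) - μ)
    (hbc0 : u' 0 = 0) (hbc1 : u' 1 = 0) :
    1/M ≤ lam := by
  have hcont : ContinuousOn u (Set.Icc 0 1) :=
    fun s hs => (hu' s hs).continuousAt.continuousWithinAt
  have hne01 : (Set.Icc (0:ℝ) 1).Nonempty := ⟨0, by norm_num⟩
  obtain ⟨sM, hsM, hmaxM⟩ := isCompact_Icc.exists_isMaxOn hne01 hcont
  obtain ⟨sm, hsm, hminm⟩ := isCompact_Icc.exists_isMinOn hne01 hcont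
  have hmax : ∀ t ∈ Set.Icc (0:ℝ) 1, u t ≤ u sM := hmaxM
  have hmin : ∀ t ∈ Set.Icc (0:ℝ) 1, u sm ≤ u t := hminm
  have hint : IntervalIntegrable u MeasureTheory.volume 0 1 := by
    apply ContinuousOn.intervalIntegrable
    rwa [Set.uIcc_of_le (by norm_num : (0:ℝ) ≤ 1)]
  -- 0 ≤ u sM
  have hMpos : 0 ≤ u sM := by
    have h1 : (∫ s in (0:ℝ)..1, u s) ≤ ∫ s in (0:ℝ)..1, u sM := by
      apply intervalIntegral.integral_mono_on (by norm_num) hint intervalIntegrable_const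
      exact hmax
    simpa [hmean] using h1
  have hmneg : u sm ≤ 0 := by
    have h1 : (∫ s in (0:ℝ)..1, u sm) ≤ ∫ s in (0:ℝ)..1, u s := by
      apply intervalIntegral.integral_mono_on (by norm_num) intervalIntegrable_const hint
      exact hmin
    simpa [hmean] using h1
  -- strict
  have hlt : u sm < u sM := by
    rcases eq_or_lt_of_le (le_trans hmneg hMpos : u sm ≤ u sM) with he | h
    · exfalso
      obtain ⟨s0, hs0, hs0ne⟩ := hne
      have h1 : u s0 ≤ u sM := hmax s0 hs0
      have h2 : u sm ≤ u s0 := hmin s0 hs0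
      have : u sM = 0 := le_antisymm (by rw [← he]; exact hmneg) hMpos
      apply hs0ne
      rw [this] at h1
      rw [he, this] at h2
      linarith
    · exact h
  -- second derivative signs
  have huM : u'' sM ≤ 0 :=
    second_deriv_nonpos_at_max u u' u'' hu' hu'' hbc0 hbc1 hsM hmax
  have hum : 0 ≤ u'' sm := by
    have := second_deriv_nonpos_at_max (fun x => -u x) (fun x => -u' x) (fun x => -u'' x)
      (fun s hs => (hu' s hs).neg) (fun s hs => (hu'' s hs).neg)
      (by simp [hbc0]) (by simp [hbc1]) hsm
      (fun t ht => neg_le_neg (hmin t ht))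
    simpa using this
  set aM : ℝ := (1 + u sM) / lam with haM
  set am : ℝ := (1 + u sm) / lam with ham
  have ham0 : 0 ≤ am := div_nonneg (by linarith [hge sm hsm]) hlam.le
  have haMm : am < aM := by
    rw [ham, haM]
    gcongr
  -- ODE at extrema
  have hodeM := hode sM hsM
  have hodem := hode sm hsm
  have hDWle : DW aM ≤ DW am := by
    have h1 : lam ^ 3 * DW aM - μ ≤ 0 := by rw [← hodeM]; nlinarith
    have h2 : 0 ≤ lam ^ 3 * DW am - μ := by rw [← hodem]; nlinarith
    have hl3 : (0:ℝ) < lam ^ 3 := by positivity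
    nlinarith
  -- key step : aM ≤ M
  have hkey : aM ≤ M := by
    by_contra hMlt
    push_neg at hMlt
    have hγM : γ < DW aM := by
      rw [← hMγ]
      exact hmono (le_of_lt hMκ) (le_trans hMκ.le hMlt.le) hMlt
    have hγm : γ < DW am := lt_of_lt_of_le hγM hDWle
    have hamM : M < am := by
      by_contra hc
      push_neg at hc
      have : DW am ≤ γ := by
        rcases le_or_gt am κ with hk | hk
        · rw [← hγ]
          exact hanti.antitoneOn ⟨le_rfl, hκ0.le⟩ ⟨ham0, hk⟩ ham0
        · rw [← hMγ]
          exact hmono.monotoneOn (Set.mem_Ici.2 hk.le) (Set.mem_Ici.2 hMκ.le) hc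
      linarith
    have : DW am < DW aM :=
      hmono (Set.mem_Ici.2 (le_trans hMκ.le hamM.le)) (Set.mem_Ici.2 (by linarith)) haMm
    linarith
  -- conclude
  have h1M : 1 + u sM ≤ M * lam := by
    rw [haM] at hkey
    calc 1 + u sM = ((1 + u sM)/lam) * lam := by field_simp
    _ ≤ M * lam := mul_le_mul_of_nonneg_right hkey hlam.le
  have hMpos' : (0:ℝ) < M := by linarith
  rw [div_le_iff₀ hMpos']
  nlinarith
end

section
/- Combining: if u is Lipschitz on [0,1] with u ≥ -1, u' has one-sided limits satisfying u'(s⁺) ≤ u'(s⁻) everywhere, and at every point s with u(s) = -1 one has u'(s⁺) ≥ 0 ≥ u'(s⁻), and u is C¹ away from {u = -1}, then u ∈ C¹[0,1]. -/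
open Set Filter

/-- Right-hand bound at a broken point: if `|d| ≤ ε` on good points just to the right of `s`,
then `u t + 1 ≤ ε * (t - s)` for `t` to the right of `s`. -/
lemma regularity_right_bound (u d : ℝ → ℝ) (K : NNReal)
    (hlip : LipschitzOnWith K u (Set.Icc 0 1))
    (hge : ∀ s ∈ Set.Icc (0:ℝ) 1, -1 ≤ u s)
    (hd : ∀ s ∈ Set.Icc (0:ℝ) 1, -1 < u s →
      HasDerivWithinAt u (d s) (Set.Icc 0 1) s)
    {s : ℝ} (hs : s ∈ Set.Icc (0:ℝ) 1) (hus : u s = -1)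
    {ε δ : ℝ} (hε : 0 ≤ ε)
    (hb : ∀ x ∈ Set.Icc (0:ℝ) 1, -1 < u x → s < x → x < s + δ → |d x| ≤ ε)
    {t : ℝ} (ht : t ∈ Set.Icc (0:ℝ) 1) (hst : s < t) (htδ : t < s + δ) :
    u t + 1 ≤ ε * (t - s) := by
  by_cases hut : u t = -1
  · rw [hut]; nlinarith
  have hut' : -1 < u t := lt_of_le_of_ne (hge t ht) (Ne.symm hut)
  set A : Set ℝ := {r | r ∈ Set.Icc s t ∧ u r = -1} with hA
  have hsmem : s ∈ A := ⟨⟨le_refl s, hst.le⟩, hus⟩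
  have hAne : A.Nonempty := ⟨s, hsmem⟩
  have hAbdd : BddAbove A := ⟨t, fun r hr => hr.1.2⟩
  have hsub : Set.Icc s t ⊆ Set.Icc (0:ℝ) 1 := Set.Icc_subset_Icc hs.1 ht.2
  have hclosed : IsClosed A := by
    have hcont : ContinuousOn u (Set.Icc s t) := (hlip.mono hsub).continuousOn
    have : A = Set.Icc s t ∩ u ⁻¹' {-1} := by
      ext r; simp [hA, Set.mem_preimage]
    rw [this]
    exact hcont.preimage_isClosed_of_isClosed isClosed_Icc isClosed_singleton
  set a := sSup A with ha
  have haA : a ∈ A := hclosed.csSup_mem hAne hAbdd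
  have has : s ≤ a := le_csSup hAbdd hsmem
  have hat : a < t := by
    refine lt_of_le_of_ne (csSup_le hAne fun r hr => hr.1.2) fun h => ?_
    exact hut (h ▸ haA.2)
  have hgood : ∀ r, a < r → r ≤ t → -1 < u r := by
    intro r h1 h2
    refine lt_of_le_of_ne (hge r (hsub ⟨has.trans h1.le, h2⟩)) fun h => ?_
    exact absurd (le_csSup hAbdd ⟨⟨has.trans h1.le, h2⟩, h.symm⟩) (not_le.mpr h1)
  refine le_of_forall_pos_le_add fun η hη => ?_
  have hK1 : (0:ℝ) < (K:ℝ) + 1 := by positivity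
  set a' := a + min ((t - a) / 2) (η / ((K:ℝ) + 1)) with ha'
  have hmin1 : (0:ℝ) < (t - a) / 2 := by linarith
  have hmin2 : (0:ℝ) < η / ((K:ℝ) + 1) := by positivity
  have haa' : a < a' := by
    have := lt_min hmin1 hmin2
    simp only [ha']; linarith
  have ha't : a' < t := by
    have h1 : min ((t - a) / 2) (η / ((K:ℝ) + 1)) ≤ (t - a) / 2 := min_le_left _ _
    simp only [ha']; linarith
  have hsub2 : Set.Icc a' t ⊆ Set.Icc (0:ℝ) 1 :=
    Set.Icc_subset_Icc (by linarith [hs.1]) ht.2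
  have key : ‖u t - u a'‖ ≤ ε * ‖t - a'‖ := by
    refine Convex.norm_image_sub_le_of_norm_hasDerivWithin_le (f' := d)
      (fun x hx => ?_) (fun x hx => ?_) (convex_Icc a' t)
      (Set.left_mem_Icc.mpr ha't.le) (Set.right_mem_Icc.mpr ha't.le)
    · exact (hd x (hsub2 hx) (hgood x (haa'.trans_le hx.1) hx.2)).mono hsub2
    · rw [Real.norm_eq_abs]
      exact hb x (hsub2 hx) (hgood x (haa'.trans_le hx.1) hx.2)
        (has.trans_lt (haa'.trans_le hx.1)) (lt_of_le_of_lt hx.2 htδ)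
  have hlipb : |u a' - u a| ≤ (K:ℝ) * |a' - a| := by
    have := hlip.dist_le_mul a' (hsub2 (Set.left_mem_Icc.mpr ha't.le))
      a (hsub ⟨has, hat.le⟩)
    simpa [Real.dist_eq] using this
  have hka : (K:ℝ) * |a' - a| ≤ η := by
    rw [abs_of_pos (by linarith : (0:ℝ) < a' - a)]
    have h2 : a' - a ≤ η / ((K:ℝ) + 1) := by
      simp only [ha']; simp [min_le_right]
    calc (K:ℝ) * (a' - a) ≤ ((K:ℝ) + 1) * (η / ((K:ℝ) + 1)) := by
          apply mul_le_mul (by linarith) h2 (by linarith) (by linarith)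
      _ = η := by field_simp
  have h1 : u t - u a' ≤ ε * (t - a') := by
    have := le_trans (le_abs_self _) key
    rwa [Real.norm_eq_abs, abs_of_pos (by linarith : (0:ℝ) < t - a')] at this
  have h2 : u a' - u a ≤ η := le_trans (le_abs_self _) (hlipb.trans hka)
  have h3 : ε * (t - a') ≤ ε * (t - s) := by
    apply mul_le_mul_of_nonneg_left (by linarith) hε
  have h4 : u a = -1 := haA.2
  linarith

/-- Left-hand bound at a broken point. -/
lemma regularity_left_bound (u d : ℝ → ℝ) (K : NNReal)
    (hlip : LipschitzOnWith K u (Set.Icc 0 1))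
    (hge : ∀ s ∈ Set.Icc (0:ℝ) 1, -1 ≤ u s)
    (hd : ∀ s ∈ Set.Icc (0:ℝ) 1, -1 < u s →
      HasDerivWithinAt u (d s) (Set.Icc 0 1) s)
    {s : ℝ} (hs : s ∈ Set.Icc (0:ℝ) 1) (hus : u s = -1)
    {ε δ : ℝ} (hε : 0 ≤ ε)
    (hb : ∀ x ∈ Set.Icc (0:ℝ) 1, -1 < u x → x < s → s - δ < x → |d x| ≤ ε)
    {t : ℝ} (ht : t ∈ Set.Icc (0:ℝ) 1) (hst : t < s) (htδ : s - δ < t) :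
    u t + 1 ≤ ε * (s - t) := by
  by_cases hut : u t = -1
  · rw [hut]; nlinarith
  have hut' : -1 < u t := lt_of_le_of_ne (hge t ht) (Ne.symm hut)
  set A : Set ℝ := {r | r ∈ Set.Icc t s ∧ u r = -1} with hA
  have hsmem : s ∈ A := ⟨⟨hst.le, le_refl s⟩, hus⟩
  have hAne : A.Nonempty := ⟨s, hsmem⟩
  have hAbdd : BddBelow A := ⟨t, fun r hr => hr.1.1⟩
  have hsub : Set.Icc t s ⊆ Set.Icc (0:ℝ) 1 := Set.Icc_subset_Icc ht.1 hs.2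
  have hclosed : IsClosed A := by
    have hcont : ContinuousOn u (Set.Icc t s) := (hlip.mono hsub).continuousOn
    have : A = Set.Icc t s ∩ u ⁻¹' {-1} := by
      ext r; simp [hA, Set.mem_preimage]
    rw [this]
    exact hcont.preimage_isClosed_of_isClosed isClosed_Icc isClosed_singleton
  set a := sInf A with ha
  have haA : a ∈ A := hclosed.csInf_mem hAne hAbdd
  have has : a ≤ s := csInf_le hAbdd hsmem
  have hat : t < a := by
    refine lt_of_le_of_ne (le_csInf hAne fun r hr => hr.1.1) fun h => ?_
    exact hut (h ▸ haA.2)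
  have hgood : ∀ r, t ≤ r → r < a → -1 < u r := by
    intro r h1 h2
    refine lt_of_le_of_ne (hge r (hsub ⟨h1, h2.le.trans has⟩)) fun h => ?_
    exact absurd (csInf_le hAbdd ⟨⟨h1, h2.le.trans has⟩, h.symm⟩) (not_le.mpr h2)
  refine le_of_forall_pos_le_add fun η hη => ?_
  have hK1 : (0:ℝ) < (K:ℝ) + 1 := by positivity
  set a' := a - min ((a - t) / 2) (η / ((K:ℝ) + 1)) with ha'
  have hmin1 : (0:ℝ) < (a - t) / 2 := by linarith
  have hmin2 : (0:ℝ) < η / ((K:ℝ) + 1) := by positivity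
  have haa' : a' < a := by
    have := lt_min hmin1 hmin2
    simp only [ha']; linarith
  have ha't : t < a' := by
    have h1 : min ((a - t) / 2) (η / ((K:ℝ) + 1)) ≤ (a - t) / 2 := min_le_left _ _
    simp only [ha']; linarith
  have hsub2 : Set.Icc t a' ⊆ Set.Icc (0:ℝ) 1 :=
    Set.Icc_subset_Icc ht.1 (by linarith [hs.2])
  have key : ‖u a' - u t‖ ≤ ε * ‖a' - t‖ := by
    refine Convex.norm_image_sub_le_of_norm_hasDerivWithin_le (f' := d)
      (fun x hx => ?_) (fun x hx => ?_) (convex_Icc t a')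
      (Set.left_mem_Icc.mpr ha't.le) (Set.right_mem_Icc.mpr ha't.le)
    · exact (hd x (hsub2 hx) (hgood x hx.1 (lt_of_le_of_lt hx.2 haa'))).mono hsub2
    · rw [Real.norm_eq_abs]
      exact hb x (hsub2 hx) (hgood x hx.1 (lt_of_le_of_lt hx.2 haa'))
        (lt_of_lt_of_le (lt_of_le_of_lt hx.2 haa') has) (by linarith [hx.1])
  have hlipb : |u a' - u a| ≤ (K:ℝ) * |a' - a| := by
    have := hlip.dist_le_mul a' (hsub2 (Set.right_mem_Icc.mpr ha't.le))
      a (hsub ⟨hat.le, has⟩)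
    simpa [Real.dist_eq] using this
  have hka : (K:ℝ) * |a' - a| ≤ η := by
    rw [abs_of_neg (by linarith : a' - a < 0)]
    have h2 : a - a' ≤ η / ((K:ℝ) + 1) := by
      simp only [ha']; simp [min_le_right]
    calc (K:ℝ) * -(a' - a) ≤ ((K:ℝ) + 1) * (η / ((K:ℝ) + 1)) := by
          apply mul_le_mul (by linarith) (by linarith) (by linarith) (by linarith)
      _ = η := by field_simp
  have h1 : u t - u a' ≤ ε * (a' - t) := by
    have h0 := le_trans (neg_le_abs _) key
    rwa [Real.norm_eq_abs, abs_of_pos (by linarith : (0:ℝ) < a' - t),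
      neg_sub] at h0
  have h2 : u a' - u a ≤ η := le_trans (le_abs_self _) (hlipb.trans hka)
  have h3 : ε * (a' - t) ≤ ε * (s - t) := by
    apply mul_le_mul_of_nonneg_left (by linarith) hε
  have h4 : u a = -1 := haA.2
  linarith

/-- If `u` is Lipschitz on `[0,1]` with `u ≥ -1`, C¹ with derivative `d`
on the glued set `{u > -1}`, the one-sided limits of `d` satisfy `d(s⁺) ≤ d(s⁻)`
everywhere, and at broken points (`u(s) = -1`) one has `d(s⁺) ≥ 0 ≥ d(s⁻)`, then
`u ∈ C¹[0,1]`: it has a continuous derivative on all of `[0,1]`. -/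
theorem regularity_C1
    (u d : ℝ → ℝ) (K : NNReal)
    (hlip : LipschitzOnWith K u (Set.Icc 0 1))
    (hge : ∀ s ∈ Set.Icc (0:ℝ) 1, -1 ≤ u s)
    (hd : ∀ s ∈ Set.Icc (0:ℝ) 1, -1 < u s →
      HasDerivWithinAt u (d s) (Set.Icc 0 1) s)
    (hdc : ContinuousOn d {s ∈ Set.Icc (0:ℝ) 1 | -1 < u s})
    (hlim : ∀ s ∈ Set.Icc (0:ℝ) 1, ∃ R L : ℝ,
      Filter.Tendsto d
        (nhdsWithin s ({t ∈ Set.Icc (0:ℝ) 1 | -1 < u t} ∩ Set.Ioi s)) (nhds R) ∧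
      Filter.Tendsto d
        (nhdsWithin s ({t ∈ Set.Icc (0:ℝ) 1 | -1 < u t} ∩ Set.Iio s)) (nhds L) ∧
      R ≤ L ∧ (u s = -1 → 0 ≤ R ∧ L ≤ 0)) :
    ∃ dd : ℝ → ℝ, ContinuousOn dd (Set.Icc 0 1) ∧
      ∀ s ∈ Set.Icc (0:ℝ) 1, HasDerivWithinAt u (dd s) (Set.Icc 0 1) s := by
  classical
  set dd : ℝ → ℝ := fun x => if -1 < u x then d x else 0 with hdd
  refine ⟨dd, ?_, ?_⟩
  · -- continuity
    intro s hs
    by_cases hus : -1 < u s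
    · have hu : ContinuousWithinAt u (Set.Icc 0 1) s := hlip.continuousOn s hs
      have hev : u ⁻¹' Set.Ioi (-1) ∈ nhdsWithin s (Set.Icc 0 1) :=
        hu (Ioi_mem_nhds hus)
      have hmem : {t ∈ Set.Icc (0:ℝ) 1 | -1 < u t} ∈ nhdsWithin s (Set.Icc 0 1) := by
        refine Filter.mem_of_superset (Filter.inter_mem self_mem_nhdsWithin hev) ?_
        intro x hx; exact ⟨hx.1, hx.2⟩
      have hdS : ContinuousWithinAt d {t ∈ Set.Icc (0:ℝ) 1 | -1 < u t} s :=
        hdc s ⟨hs, hus⟩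
      have hdI : ContinuousWithinAt d (Set.Icc 0 1) s := hdS.mono_of_mem_nhdsWithin hmem
      refine hdI.congr_of_eventuallyEq ?_ (if_pos hus)
      exact Filter.eventually_of_mem hmem fun x hx => if_pos hx.2
    · have husm : u s = -1 := le_antisymm (not_lt.mp hus) (hge s hs)
      obtain ⟨R, L, hR, hL, hRL, hbrk⟩ := hlim s hs
      obtain ⟨hR0, hL0⟩ := hbrk husm
      have hReq : R = 0 := le_antisymm (hRL.trans hL0) hR0
      have hLeq : L = 0 := le_antisymm hL0 (hR0.trans hRL)
      rw [hReq] at hR; rw [hLeq] at hL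
      have htend : Filter.Tendsto dd (nhdsWithin s (Set.Icc 0 1)) (nhds 0) := by
        rw [Metric.tendsto_nhdsWithin_nhds]
        intro ε hε
        obtain ⟨δ₁, hδ₁, hb₁⟩ := Metric.tendsto_nhdsWithin_nhds.mp hR ε hε
        obtain ⟨δ₂, hδ₂, hb₂⟩ := Metric.tendsto_nhdsWithin_nhds.mp hL ε hε
        refine ⟨min δ₁ δ₂, lt_min hδ₁ hδ₂, fun t ht hdist => ?_⟩
        by_cases hut : -1 < u t
        · have hts : t ≠ s := fun h => absurd (h ▸ hut) hus
          have hddt : dd t = d t := if_pos hut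
          rw [hddt]
          rcases lt_or_gt_of_ne hts with h | h
          · exact hb₂ ⟨⟨ht, hut⟩, h⟩ (lt_of_lt_of_le hdist (min_le_right _ _))
          · exact hb₁ ⟨⟨ht, hut⟩, h⟩ (lt_of_lt_of_le hdist (min_le_left _ _))
        · have : dd t = 0 := if_neg hut
          rw [this]; simpa using hε
      have hdds : dd s = 0 := if_neg hus
      show Filter.Tendsto dd (nhdsWithin s (Set.Icc 0 1)) (nhds (dd s))
      rw [hdds]; exact htend
  · -- derivative
    intro s hs
    by_cases hus : -1 < u s
    · rw [show dd s = d s from if_pos hus]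
      exact hd s hs hus
    · have husm : u s = -1 := le_antisymm (not_lt.mp hus) (hge s hs)
      rw [show dd s = 0 from if_neg hus]
      obtain ⟨R, L, hR, hL, hRL, hbrk⟩ := hlim s hs
      obtain ⟨hR0, hL0⟩ := hbrk husm
      have hReq : R = 0 := le_antisymm (hRL.trans hL0) hR0
      have hLeq : L = 0 := le_antisymm hL0 (hR0.trans hRL)
      rw [hReq] at hR; rw [hLeq] at hL
      rw [hasDerivWithinAt_iff_tendsto_slope, Metric.tendsto_nhdsWithin_nhds]
      intro ε hε
      have hε2 : (0:ℝ) < ε / 2 := by linarith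
      obtain ⟨δ₁, hδ₁, hb₁⟩ := Metric.tendsto_nhdsWithin_nhds.mp hR (ε/2) hε2
      obtain ⟨δ₂, hδ₂, hb₂⟩ := Metric.tendsto_nhdsWithin_nhds.mp hL (ε/2) hε2
      set δ := min δ₁ δ₂ with hδdef
      have hδ : (0:ℝ) < δ := lt_min hδ₁ hδ₂
      have hbR : ∀ x ∈ Set.Icc (0:ℝ) 1, -1 < u x → s < x → x < s + δ → |d x| ≤ ε/2 := by
        intro x hx hgx hsx hxδ
        have hdx : dist x s < δ₁ := by
          rw [Real.dist_eq, abs_of_pos (by linarith : (0:ℝ) < x - s)]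
          have : δ ≤ δ₁ := min_le_left _ _
          linarith
        have := hb₁ ⟨⟨hx, hgx⟩, hsx⟩ hdx
        rw [Real.dist_eq, sub_zero] at this
        exact this.le
      have hbL : ∀ x ∈ Set.Icc (0:ℝ) 1, -1 < u x → x < s → s - δ < x → |d x| ≤ ε/2 := by
        intro x hx hgx hsx hxδ
        have hdx : dist x s < δ₂ := by
          rw [Real.dist_eq, abs_of_neg (by linarith : x - s < 0)]
          have : δ ≤ δ₂ := min_le_right _ _
          linarith
        have := hb₂ ⟨⟨hx, hgx⟩, hsx⟩ hdx
        rw [Real.dist_eq, sub_zero] at this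
        exact this.le
      refine ⟨δ, hδ, fun t ht hdist => ?_⟩
      have ht1 : t ∈ Set.Icc (0:ℝ) 1 := ht.1
      have hts : t ≠ s := ht.2
      rw [Real.dist_eq] at hdist
      rw [Real.dist_eq, sub_zero, slope_def_field, husm, sub_neg_eq_add, abs_div]
      have hnum : 0 ≤ u t + 1 := by linarith [hge t ht1]
      rw [abs_of_nonneg hnum]
      rcases lt_or_gt_of_ne hts with h | h
      · have hbnd := regularity_left_bound u d K hlip hge hd hs husm
          (le_of_lt hε2) hbL ht1 h
          (by rw [abs_of_neg (by linarith : t - s < 0)] at hdist; linarith)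
        rw [abs_of_neg (by linarith : t - s < 0)]
        rw [div_lt_iff₀ (by linarith : (0:ℝ) < -(t - s))]
        nlinarith
      · have hbnd := regularity_right_bound u d K hlip hge hd hs husm
          (le_of_lt hε2) hbR ht1 h
          (by rw [abs_of_pos (by linarith : (0:ℝ) < t - s)] at hdist; linarith)
        rw [abs_of_pos (by linarith : (0:ℝ) < t - s)]
        rw [div_lt_iff₀ (by linarith : (0:ℝ) < t - s)]
        nlinarith
end

section
/- For the trivial solution u ≡ 0 and any λ ∈ (0, λ₁), the second variation δ²V_ε[λ,0;η] = ∫₀¹ [ε(η')² + λ² Ẅ*(1/λ) η²] ds is nonnegative for all η ∈ H¹(0,1) with ∫₀¹ η = 0; specifically δ²V_ε[λ,0;η] ≥ [επ² + λ²Ẅ*(1/λ)] ∫₀¹ η² ds, using the sharp Poincaré inequality ∫₀¹(η')² ≥ π² ∫₀¹ η² for zero-mean η ∈ H¹(0,1). -/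
open Real intervalIntegral MeasureTheory Set Filter Topology

noncomputable def PP (g : ℝ → ℝ) (x : ℝ) : ℝ :=
  Real.pi * Real.cos (Real.pi * x) * (g x)^2 / Real.sin (Real.pi * x)

lemma hasDerivPP (g g' : ℝ → ℝ) (s : ℝ) (hs : 0 < s) (hs2 : s < 1)
    (hgd : HasDerivAt g (g' s) s) :
    HasDerivAt (PP g)
      ((g' s)^2 - Real.pi^2 * (g s)^2
        - (g' s - Real.pi * Real.cos (Real.pi*s) / Real.sin (Real.pi*s) * g s)^2) s := by
  have hsin : 0 < Real.sin (Real.pi * s) := by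
    apply Real.sin_pos_of_pos_of_lt_pi
    · positivity
    · nlinarith [Real.pi_pos]
  have h1 : HasDerivAt (fun x : ℝ => Real.sin (Real.pi * x)) (Real.cos (Real.pi*s) * Real.pi) s := by
    simpa [Function.comp_def] using (Real.hasDerivAt_sin (Real.pi * s)).comp s ((hasDerivAt_id s).const_mul Real.pi)
  have h2 : HasDerivAt (fun x : ℝ => Real.cos (Real.pi * x)) (-Real.sin (Real.pi*s) * Real.pi) s := by
    simpa [Function.comp_def] using (Real.hasDerivAt_cos (Real.pi * s)).comp s ((hasDerivAt_id s).const_mul Real.pi)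
  have h3 : HasDerivAt (fun x : ℝ => (g x)^2) (2 * g s * g' s) s := by
    simpa [mul_comm, Pi.pow_def] using (hgd.pow 2)
  have h4 : HasDerivAt (fun x : ℝ => Real.pi * Real.cos (Real.pi * x) * (g x)^2)
      (Real.pi * (-Real.sin (Real.pi*s) * Real.pi) * (g s)^2
        + Real.pi * Real.cos (Real.pi*s) * (2 * g s * g' s)) s :=
    ((h2.const_mul Real.pi).mul h3)
  have h5 := h4.div h1 (ne_of_gt hsin)
  refine HasDerivAt.congr_deriv h5 ?_
  have hpyth := Real.sin_sq_add_cos_sq (Real.pi * s)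
  field_simp
  nlinarith [hpyth, sq_nonneg (g s), sq_nonneg (g' s), sq_nonneg (Real.sin (Real.pi*s))]

lemma lemA (g g' : ℝ → ℝ)
    (hg : ∀ s ∈ Set.Icc (0:ℝ) (1/2), HasDerivAt g (g' s) s)
    (hg' : ContinuousOn g' (Set.Icc 0 (1/2)))
    (h0 : g 0 = 0) :
    Real.pi^2 * ∫ s in (0:ℝ)..(1/2), (g s)^2 ≤ ∫ s in (0:ℝ)..(1/2), (g' s)^2 := by
  have hcg : ContinuousOn g (Set.Icc 0 (1/2)) :=
    fun s hs => (hg s hs).continuousAt.continuousWithinAt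
  set f : ℝ → ℝ := fun s => (g' s)^2 - Real.pi^2 * (g s)^2 with hf
  have hcf : ContinuousOn f (Set.Icc 0 (1/2)) := by
    apply ContinuousOn.sub (hg'.pow 2) (ContinuousOn.mul continuousOn_const (hcg.pow 2))
  -- key inequality for positive δ
  have key : ∀ δ ∈ Set.Ioc (0:ℝ) (1/2), -(PP g δ) ≤ ∫ s in δ..(1/2), f s := by
    intro δ hδ
    obtain ⟨hδ0, hδ2⟩ := hδ
    set q : ℝ → ℝ := fun s =>
      (g' s - Real.pi * Real.cos (Real.pi*s) / Real.sin (Real.pi*s) * g s)^2 with hq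
    have hsub : Set.Icc δ (1/2) ⊆ Set.Icc (0:ℝ) (1/2) :=
      Set.Icc_subset_Icc hδ0.le le_rfl
    have hsinpos : ∀ s ∈ Set.Icc δ (1/2), 0 < Real.sin (Real.pi * s) := by
      intro s hs
      apply Real.sin_pos_of_pos_of_lt_pi
      · nlinarith [Real.pi_pos, hs.1]
      · nlinarith [Real.pi_pos, hs.2, Real.pi_gt_three]
    have hcq : ContinuousOn q (Set.Icc δ (1/2)) := by
      apply ContinuousOn.pow
      apply ContinuousOn.sub (hg'.mono hsub)
      apply ContinuousOn.mul
      · apply ContinuousOn.div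
        · exact (continuousOn_const.mul ((Real.continuous_cos.comp
            (continuous_const.mul continuous_id)).continuousOn))
        · exact (Real.continuous_sin.comp (continuous_const.mul continuous_id)).continuousOn
        · exact fun s hs => (hsinpos s hs).ne'
      · exact hcg.mono hsub
    have hderiv : ∀ s ∈ Set.uIcc δ (1/2), HasDerivAt (PP g) (f s - q s) s := by
      intro s hs
      rw [Set.uIcc_of_le hδ2] at hs
      exact hasDerivPP g g' s (lt_of_lt_of_le hδ0 hs.1)
        (by nlinarith [hs.2]) (hg s (hsub hs))
    have hint : IntervalIntegrable (fun s => f s - q s) volume δ (1/2) := by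
      apply ContinuousOn.intervalIntegrable
      rw [Set.uIcc_of_le hδ2]
      exact (hcf.mono hsub).sub hcq
    have hftc := intervalIntegral.integral_eq_sub_of_hasDerivAt hderiv hint
    have hP12 : PP g (1/2) = 0 := by
      unfold PP
      rw [show Real.pi * (1/2) = Real.pi/2 by ring, Real.cos_pi_div_two]
      simp
    have hfint : IntervalIntegrable f volume δ (1/2) := by
      apply ContinuousOn.intervalIntegrable
      rw [Set.uIcc_of_le hδ2]; exact hcf.mono hsub
    have hqint : IntervalIntegrable q volume δ (1/2) := by
      apply ContinuousOn.intervalIntegrable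
      rw [Set.uIcc_of_le hδ2]; exact hcq
    have hsplit : (∫ s in δ..(1/2), (f s - q s)) = (∫ s in δ..(1/2), f s) - ∫ s in δ..(1/2), q s :=
      intervalIntegral.integral_sub hfint hqint
    have hqnn : 0 ≤ ∫ s in δ..(1/2), q s := by
      apply intervalIntegral.integral_nonneg hδ2
      intro s hs; positivity
    rw [hftc, hP12] at hsplit
    linarith
  -- limit of the integral
  have hfint0 : IntervalIntegrable f volume 0 (1/2) := by
    apply ContinuousOn.intervalIntegrable
    rw [Set.uIcc_of_le (by norm_num : (0:ℝ) ≤ 1/2)]; exact hcf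
  have hIoo : Set.Ioo (0:ℝ) (1/2) ∈ 𝓝[>] (0:ℝ) :=
    Ioo_mem_nhdsGT_of_mem (by norm_num)
  -- the truncated integral tends to the full one
  obtain ⟨M, hM⟩ := (isCompact_Icc.exists_bound_of_continuousOn hcf)
  have hsmall : Tendsto (fun δ : ℝ => ∫ s in (0:ℝ)..δ, f s) (𝓝[>] 0) (𝓝 0) := by
    have hb : ∀ᶠ δ in 𝓝[>] (0:ℝ), ‖∫ s in (0:ℝ)..δ, f s‖ ≤ M * δ := by
      filter_upwards [hIoo] with δ hδ
      have hbd : ∀ x ∈ Set.uIoc (0:ℝ) δ, ‖f x‖ ≤ M := by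
        intro x hx
        rw [Set.uIoc_of_le hδ.1.le] at hx
        exact hM x ⟨hx.1.le, hx.2.trans hδ.2.le⟩
      calc ‖∫ s in (0:ℝ)..δ, f s‖ ≤ M * |δ - 0| :=
            intervalIntegral.norm_integral_le_of_norm_le_const hbd
        _ = M * δ := by rw [sub_zero, abs_of_pos hδ.1]
    have hgM : Tendsto (fun δ : ℝ => M * δ) (𝓝[>] (0:ℝ)) (𝓝 0) := by
      have : Tendsto (fun δ : ℝ => M * δ) (𝓝 0) (𝓝 (M * 0)) := (tendsto_id.const_mul M)
      simpa using this.mono_left nhdsWithin_le_nhds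
    exact squeeze_zero_norm' hb hgM
  have hI : Tendsto (fun δ : ℝ => ∫ s in δ..(1/2), f s) (𝓝[>] 0)
      (𝓝 (∫ s in (0:ℝ)..(1/2), f s)) := by
    have heq : ∀ᶠ δ in 𝓝[>] (0:ℝ),
        (∫ s in (0:ℝ)..(1/2), f s) - (∫ s in (0:ℝ)..δ, f s) = ∫ s in δ..(1/2), f s := by
      filter_upwards [hIoo] with δ hδ
      apply intervalIntegral.integral_interval_sub_left hfint0
      apply hfint0.mono_set
      rw [Set.uIcc_of_le hδ.1.le, Set.uIcc_of_le (by norm_num : (0:ℝ) ≤ 1/2)]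
      exact Set.Icc_subset_Icc le_rfl hδ.2.le
    have : Tendsto (fun δ : ℝ => (∫ s in (0:ℝ)..(1/2), f s) - (∫ s in (0:ℝ)..δ, f s))
        (𝓝[>] 0) (𝓝 ((∫ s in (0:ℝ)..(1/2), f s) - 0)) := tendsto_const_nhds.sub hsmall
    rw [sub_zero] at this
    exact this.congr' heq
  -- P tends to 0
  have hg0 : HasDerivAt g (g' 0) 0 := hg 0 ⟨le_rfl, by norm_num⟩
  have hslope : Tendsto (fun δ : ℝ => g δ / δ) (𝓝[>] (0:ℝ)) (𝓝 (g' 0)) := by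
    have h1 := hasDerivAt_iff_tendsto_slope.mp hg0
    have h2 : (𝓝[>] (0:ℝ)) ≤ 𝓝[≠] (0:ℝ) :=
      nhdsWithin_mono _ (fun x hx => by simpa using ne_of_gt hx)
    have h3 := h1.mono_left h2
    apply h3.congr
    intro δ
    simp [slope_def_field, h0]
  have hsinslope : Tendsto (fun δ : ℝ => δ / Real.sin (Real.pi * δ)) (𝓝[>] (0:ℝ))
      (𝓝 (Real.pi⁻¹)) := by
    have hsd : HasDerivAt (fun x : ℝ => Real.sin (Real.pi * x)) Real.pi 0 := by
      have := (Real.hasDerivAt_sin (Real.pi * 0)).comp 0 ((hasDerivAt_id 0).const_mul Real.pi)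
      simpa [Function.comp_def] using this
    have h1 := hasDerivAt_iff_tendsto_slope.mp hsd
    have h2 : (𝓝[>] (0:ℝ)) ≤ 𝓝[≠] (0:ℝ) :=
      nhdsWithin_mono _ (fun x hx => by simpa using ne_of_gt hx)
    have h3 := (h1.mono_left h2).inv₀ Real.pi_ne_zero
    apply h3.congr
    intro δ
    simp [slope_def_field, inv_div]
  have hcospart : Tendsto (fun δ : ℝ => Real.pi * Real.cos (Real.pi * δ)) (𝓝[>] (0:ℝ))
      (𝓝 Real.pi) := by
    have hc : Continuous (fun δ : ℝ => Real.pi * Real.cos (Real.pi * δ)) :=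
      continuous_const.mul (Real.continuous_cos.comp (continuous_const.mul continuous_id))
    have h := (hc.tendsto 0).mono_left (nhdsWithin_le_nhds (s := Set.Ioi (0:ℝ)))
    simpa using h
  have hid : Tendsto (fun δ : ℝ => δ) (𝓝[>] (0:ℝ)) (𝓝 0) :=
    tendsto_id.mono_left nhdsWithin_le_nhds
  have hPlim : Tendsto (fun δ : ℝ => PP g δ) (𝓝[>] (0:ℝ)) (𝓝 0) := by
    have hprod := ((hcospart.mul (hslope.pow 2)).mul hid).mul hsinslope
    have hprod' : Tendsto (fun δ : ℝ =>
        Real.pi * Real.cos (Real.pi * δ) * (g δ / δ)^2 * δ * (δ / Real.sin (Real.pi * δ)))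
        (𝓝[>] (0:ℝ)) (𝓝 0) := by
      convert hprod using 2
      ring
    apply hprod'.congr'
    filter_upwards [hIoo] with δ hδ
    have hsin : 0 < Real.sin (Real.pi * δ) := by
      apply Real.sin_pos_of_pos_of_lt_pi
      · nlinarith [Real.pi_pos, hδ.1]
      · nlinarith [Real.pi_pos, hδ.2, Real.pi_gt_three]
    have hd0 : δ ≠ 0 := ne_of_gt hδ.1
    have hs0 : Real.sin (Real.pi * δ) ≠ 0 := ne_of_gt hsin
    unfold PP
    field_simp
  -- conclude
  have hkey' : ∀ᶠ δ in 𝓝[>] (0:ℝ), -(PP g δ) ≤ ∫ s in δ..(1/2), f s := by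
    filter_upwards [hIoo] with δ hδ
    exact key δ ⟨hδ.1, hδ.2.le⟩
  have hPneg : Tendsto (fun δ : ℝ => -(PP g δ)) (𝓝[>] (0:ℝ)) (𝓝 0) := by
    simpa using hPlim.neg
  have hnn : (0:ℝ) ≤ ∫ s in (0:ℝ)..(1/2), f s :=
    le_of_tendsto_of_tendsto hPneg hI hkey'
  have hg2int : IntervalIntegrable (fun s => (g' s)^2) volume 0 (1/2) := by
    apply ContinuousOn.intervalIntegrable
    rw [Set.uIcc_of_le (by norm_num : (0:ℝ) ≤ 1/2)]; exact hg'.pow 2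
  have hgint : IntervalIntegrable (fun s => Real.pi^2 * (g s)^2) volume 0 (1/2) := by
    apply ContinuousOn.intervalIntegrable
    rw [Set.uIcc_of_le (by norm_num : (0:ℝ) ≤ 1/2)]
    exact continuousOn_const.mul (hcg.pow 2)
  have hsplit2 : (∫ s in (0:ℝ)..(1/2), f s)
      = (∫ s in (0:ℝ)..(1/2), (g' s)^2) - ∫ s in (0:ℝ)..(1/2), Real.pi^2 * (g s)^2 :=
    intervalIntegral.integral_sub hg2int hgint
  rw [hsplit2, intervalIntegral.integral_const_mul] at hnn
  linarith

lemma lemB (g g' : ℝ → ℝ)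
    (hg : ∀ s ∈ Set.Icc (1/2:ℝ) 1, HasDerivAt g (g' s) s)
    (hg' : ContinuousOn g' (Set.Icc (1/2) 1))
    (h1 : g 1 = 0) :
    Real.pi^2 * ∫ s in (1/2:ℝ)..1, (g s)^2 ≤ ∫ s in (1/2:ℝ)..1, (g' s)^2 := by
  have hmap : ∀ s ∈ Set.Icc (0:ℝ) (1/2), (1 - s) ∈ Set.Icc (1/2:ℝ) 1 := by
    intro s hs; constructor <;> [linarith [hs.2]; linarith [hs.1]]
  have hA := lemA (fun x => g (1 - x)) (fun x => -g' (1 - x))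
    (by
      intro s hs
      have hd : HasDerivAt (fun x : ℝ => 1 - x) (-1) s := by
        simpa using (hasDerivAt_id s).const_sub 1
      have := (hg (1 - s) (hmap s hs)).comp s hd
      simpa [Function.comp_def] using this)
    (by
      apply ContinuousOn.neg
      apply hg'.comp (continuous_const.sub continuous_id).continuousOn
      intro s hs; exact hmap s hs)
    (by simpa using h1)
  have e1 : (∫ s in (0:ℝ)..(1/2), (g (1 - s))^2) = ∫ s in (1/2:ℝ)..1, (g s)^2 := by
    have h := intervalIntegral.integral_comp_sub_left (a := (0:ℝ)) (b := 1/2)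
      (fun x => (g x)^2) 1
    norm_num at h ⊢
    exact h
  have e2 : (∫ s in (0:ℝ)..(1/2), (-g' (1 - s))^2) = ∫ s in (1/2:ℝ)..1, (g' s)^2 := by
    have h := intervalIntegral.integral_comp_sub_left (a := (0:ℝ)) (b := 1/2)
      (fun x => (g' x)^2) 1
    have h2 : (∫ s in (0:ℝ)..(1/2), (-g' (1 - s))^2)
        = ∫ s in (0:ℝ)..(1/2), (g' (1 - s))^2 := by
      apply intervalIntegral.integral_congr; intro x hx
      simp only [neg_sq]
    rw [h2]
    norm_num at h ⊢
    exact h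
  rw [e1, e2] at hA
  exact hA

lemma wirtinger (η η' : ℝ → ℝ)
    (hη : ∀ s ∈ Set.Icc (0:ℝ) 1, HasDerivAt η (η' s) s)
    (hη' : ContinuousOn η' (Set.Icc 0 1))
    (hmean : (∫ s in (0:ℝ)..1, η s) = 0) :
    Real.pi^2 * ∫ s in (0:ℝ)..1, (η s)^2 ≤ ∫ s in (0:ℝ)..1, (η' s)^2 := by
  have hcη : ContinuousOn η (Set.Icc 0 1) :=
    fun s hs => (hη s hs).continuousAt.continuousWithinAt
  set proj : ℝ → ℝ := fun s => max 0 (min 1 s) with hproj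
  have hprojc : Continuous proj := continuous_const.max (continuous_const.min continuous_id)
  have hprojmem : ∀ s, proj s ∈ Set.Icc (0:ℝ) 1 := by
    intro s
    constructor
    · exact le_max_left _ _
    · exact max_le (by norm_num) (min_le_left _ _)
  have hprojeq : ∀ s ∈ Set.Icc (0:ℝ) 1, proj s = s := by
    intro s hs
    simp only [hproj]
    rw [min_eq_right hs.2, max_eq_right hs.1]
  set ηt : ℝ → ℝ := η ∘ proj with hηt
  have hηtc : Continuous ηt := hcη.comp_continuous hprojc hprojmem
  have hηteq : ∀ s ∈ Set.Icc (0:ℝ) 1, ηt s = η s := by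
    intro s hs; simp only [hηt, Function.comp_apply, hprojeq s hs]
  set ζ : ℝ → ℝ := fun s => ∫ t in (0:ℝ)..s, ηt t with hζdef
  have hζ : ∀ s : ℝ, HasDerivAt ζ (ηt s) s := by
    intro s
    exact intervalIntegral.integral_hasDerivAt_right (hηtc.intervalIntegrable 0 s)
      (hηtc.stronglyMeasurableAtFilter volume (𝓝 s)) hηtc.continuousAt
  have hζc : Continuous ζ := by
    rw [continuous_iff_continuousAt]; exact fun s => (hζ s).continuousAt
  have huIcc : Set.uIcc (0:ℝ) 1 = Set.Icc 0 1 := Set.uIcc_of_le (by norm_num)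
  have hζ0 : ζ 0 = 0 := intervalIntegral.integral_same
  have hηtint : (∫ t in (0:ℝ)..1, ηt t) = ∫ t in (0:ℝ)..1, η t := by
    apply intervalIntegral.integral_congr
    rw [huIcc]; exact hηteq
  have hζ1 : ζ 1 = 0 := by
    simp only [hζdef]; rw [hηtint]; exact hmean
  have hη'int : IntervalIntegrable η' volume 0 1 := by
    apply ContinuousOn.intervalIntegrable; rwa [huIcc]
  -- integration by parts
  have hibp := intervalIntegral.integral_mul_deriv_eq_deriv_mul
      (u := ζ) (u' := ηt) (v := η) (v' := η')
      (fun x hx => hζ x)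
      (fun x hx => hη x (by rwa [huIcc] at hx))
      (hηtc.intervalIntegrable 0 1) hη'int
  have hηtη : (∫ x in (0:ℝ)..1, ηt x * η x) = ∫ x in (0:ℝ)..1, (η x)^2 := by
    apply intervalIntegral.integral_congr
    rw [huIcc]; intro x hx
    show ηt x * η x = (η x)^2
    rw [hηteq x hx]; ring
  rw [hζ0, hζ1, hηtη] at hibp
  -- ∫ ζ η' = - A
  have hibp2 : (∫ x in (0:ℝ)..1, ζ x * η' x) = -∫ x in (0:ℝ)..1, (η x)^2 := by
    rw [hibp]; ring
  -- Young inequality, multiplied through by 2π²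
  have hmono : (∫ s in (0:ℝ)..1, (-(2*Real.pi^2) * (ζ s * η' s)))
      ≤ ∫ s in (0:ℝ)..1, (Real.pi^4*(ζ s)^2 + (η' s)^2) := by
    apply intervalIntegral.integral_mono_on (by norm_num)
    · apply ContinuousOn.intervalIntegrable
      rw [huIcc]
      exact continuousOn_const.mul (hζc.continuousOn.mul hη')
    · apply ContinuousOn.intervalIntegrable
      rw [huIcc]
      exact (continuousOn_const.mul (hζc.continuousOn.pow 2)).add (hη'.pow 2)
    · intro s hs
      nlinarith [sq_nonneg (Real.pi^2 * ζ s + η' s), sq_nonneg (Real.pi^2 * ζ s - η' s)]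
  have hLHS : (∫ s in (0:ℝ)..1, (-(2*Real.pi^2) * (ζ s * η' s)))
      = 2*Real.pi^2 * ∫ x in (0:ℝ)..1, (η x)^2 := by
    rw [intervalIntegral.integral_const_mul, hibp2]; ring
  have hζ2int : ∀ a b : ℝ, IntervalIntegrable (fun s => (ζ s)^2) volume a b :=
    fun a b => ((hζc.pow 2)).intervalIntegrable a b
  have hηt2int : ∀ a b : ℝ, IntervalIntegrable (fun s => (ηt s)^2) volume a b :=
    fun a b => ((hηtc.pow 2)).intervalIntegrable a b
  have hRHS : (∫ s in (0:ℝ)..1, (Real.pi^4*(ζ s)^2 + (η' s)^2))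
      = Real.pi^4 * (∫ s in (0:ℝ)..1, (ζ s)^2) + ∫ s in (0:ℝ)..1, (η' s)^2 := by
    rw [intervalIntegral.integral_add ((hζ2int 0 1).const_mul _) (by
      apply ContinuousOn.intervalIntegrable; rw [huIcc]; exact hη'.pow 2),
      intervalIntegral.integral_const_mul]
  -- Poincaré for ζ
  have hA1 := lemA ζ ηt (fun s _ => hζ s) hηtc.continuousOn hζ0
  have hB1 := lemB ζ ηt (fun s _ => hζ s) hηtc.continuousOn hζ1
  have hsplitZ : (∫ s in (0:ℝ)..(1/2), (ζ s)^2) + (∫ s in (1/2:ℝ)..1, (ζ s)^2)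
      = ∫ s in (0:ℝ)..1, (ζ s)^2 :=
    intervalIntegral.integral_add_adjacent_intervals (hζ2int 0 (1/2)) (hζ2int (1/2) 1)
  have hsplitA : (∫ s in (0:ℝ)..(1/2), (ηt s)^2) + (∫ s in (1/2:ℝ)..1, (ηt s)^2)
      = ∫ s in (0:ℝ)..1, (ηt s)^2 :=
    intervalIntegral.integral_add_adjacent_intervals (hηt2int 0 (1/2)) (hηt2int (1/2) 1)
  have hηt2 : (∫ s in (0:ℝ)..1, (ηt s)^2) = ∫ s in (0:ℝ)..1, (η s)^2 := by
    apply intervalIntegral.integral_congr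
    rw [huIcc]; intro x hx
    show (ηt x)^2 = (η x)^2
    rw [hηteq x hx]
  have hpoin : Real.pi^2 * (∫ s in (0:ℝ)..1, (ζ s)^2) ≤ ∫ s in (0:ℝ)..1, (η s)^2 := by
    rw [← hsplitZ, ← hηt2, ← hsplitA]
    linarith
  have hπ2 : (0:ℝ) < Real.pi^2 := by positivity
  nlinarith [hmono, hLHS, hRHS, hpoin,
    mul_le_mul_of_nonneg_left hpoin (le_of_lt hπ2)]


/-- Second variation at the trivial solution for `λ < λ₁` (encoded by
`επ² + λ²Ẅ*(1/λ) > 0`, with `c := Ẅ*(1/λ)`): for every zero-mean C¹ variation `η`,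
`δ²V ≥ (επ² + λ²c)∫η² ≥ 0`, via the sharp Poincaré inequality. -/
theorem second_variation_nonneg_trivial
    (ε lam c : ℝ) (hε : 0 < ε) (hlam : 0 < lam)
    (hstab : 0 < ε * Real.pi^2 + lam^2 * c) :
    ∀ η η' : ℝ → ℝ,
      (∀ s ∈ Set.Icc (0:ℝ) 1, HasDerivAt η (η' s) s) →
      ContinuousOn η' (Set.Icc 0 1) →
      (∫ s in (0:ℝ)..1, η s) = 0 →
      (ε * Real.pi^2 + lam^2 * c) * (∫ s in (0:ℝ)..1, (η s)^2)
          ≤ (∫ s in (0:ℝ)..1, (ε * (η' s)^2 + lam^2 * c * (η s)^2)) ∧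
      0 ≤ ∫ s in (0:ℝ)..1, (ε * (η' s)^2 + lam^2 * c * (η s)^2) := by
  intro η η' hη hη' hmean
  have hW := wirtinger η η' hη hη' hmean
  have hcη : ContinuousOn η (Set.Icc 0 1) :=
    fun s hs => (hη s hs).continuousAt.continuousWithinAt
  have huIcc : Set.uIcc (0:ℝ) 1 = Set.Icc 0 1 := Set.uIcc_of_le (by norm_num)
  have hint1 : IntervalIntegrable (fun s => ε * (η' s)^2) volume 0 1 := by
    apply ContinuousOn.intervalIntegrable; rw [huIcc]
    exact continuousOn_const.mul (hη'.pow 2)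
  have hint2 : IntervalIntegrable (fun s => lam^2 * c * (η s)^2) volume 0 1 := by
    apply ContinuousOn.intervalIntegrable; rw [huIcc]
    exact continuousOn_const.mul (hcη.pow 2)
  have hsplit : (∫ s in (0:ℝ)..1, (ε * (η' s)^2 + lam^2 * c * (η s)^2))
      = ε * (∫ s in (0:ℝ)..1, (η' s)^2) + lam^2 * c * ∫ s in (0:ℝ)..1, (η s)^2 := by
    rw [intervalIntegral.integral_add hint1 hint2, intervalIntegral.integral_const_mul,
      intervalIntegral.integral_const_mul]
  have hX : 0 ≤ ∫ s in (0:ℝ)..1, (η s)^2 :=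
    intervalIntegral.integral_nonneg (by norm_num) (fun s _ => sq_nonneg _)
  have hmul := mul_le_mul_of_nonneg_left hW hε.le
  have h1 : (ε * Real.pi^2 + lam^2 * c) * (∫ s in (0:ℝ)..1, (η s)^2)
      ≤ ∫ s in (0:ℝ)..1, (ε * (η' s)^2 + lam^2 * c * (η s)^2) := by
    rw [hsplit]; nlinarith [hmul]
  refine ⟨h1, le_trans ?_ h1⟩
  exact mul_nonneg hstab.le hX
end

section
/- For λ > λ_k, the test functions η_ℓ(s) = cos(ℓπs), ℓ = 1,…,k, which have zero mean, satisfy δ²V_ε[λ,0;η_ℓ] = [ε ℓ²π² + λ² Ẅ*(1/λ)]/2, and this quantity is negative whenever ε ℓ²π²/λ² < -Ẅ*(1/λ); hence the trivial solution is unstable for λ > λ₁. -/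
open Real intervalIntegral in
lemma cos_int_zero (ℓ : ℕ) (hl : 1 ≤ ℓ) :
    (∫ s in (0:ℝ)..1, Real.cos (ℓ * Real.pi * s)) = 0 := by
  have hk : (ℓ : ℝ) * Real.pi ≠ 0 := by
    positivity
  rw [integral_comp_mul_left (fun x => Real.cos x) hk]
  simp [Real.sin_nat_mul_pi]

open Real intervalIntegral in
lemma cos_sq_int (ℓ : ℕ) (hl : 1 ≤ ℓ) :
    (∫ s in (0:ℝ)..1, Real.cos (ℓ * Real.pi * s) ^ 2) = 1 / 2 := by
  have hk : (ℓ : ℝ) * Real.pi ≠ 0 := by positivity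
  rw [integral_comp_mul_left (fun x => Real.cos x ^ 2) hk]
  rw [integral_cos_sq]
  field_simp [Real.sin_nat_mul_pi]
  rw [Real.sin_nat_mul_pi ℓ]
  simp
  field_simp

open Real intervalIntegral in
lemma sin_sq_int (ℓ : ℕ) (hl : 1 ≤ ℓ) :
    (∫ s in (0:ℝ)..1, Real.sin (ℓ * Real.pi * s) ^ 2) = 1 / 2 := by
  have hk : (ℓ : ℝ) * Real.pi ≠ 0 := by positivity
  rw [integral_comp_mul_left (fun x => Real.sin x ^ 2) hk]
  rw [integral_sin_sq]
  field_simp [Real.sin_nat_mul_pi]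
  rw [Real.sin_nat_mul_pi ℓ]
  simp
  field_simp

lemma hasDerivAt_cos_mul (k s : ℝ) :
    HasDerivAt (fun t : ℝ => Real.cos (k * t)) (-(k * Real.sin (k * s))) s := by
  have := (Real.hasDerivAt_cos (k * s)).comp s ((hasDerivAt_id s).const_mul k)
  simpa [mul_comm, Function.comp_def] using this

lemma deriv_cos_mul (k s : ℝ) :
    deriv (fun t : ℝ => Real.cos (k * t)) s = -(k * Real.sin (k * s)) :=
  (hasDerivAt_cos_mul k s).deriv

lemma key_int (ε lam c : ℝ) (ℓ : ℕ) (hl : 1 ≤ ℓ) :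
    (∫ s in (0:ℝ)..1,
        (ε * (deriv (fun t : ℝ => Real.cos (ℓ * Real.pi * t)) s)^2
          + lam^2 * c * (Real.cos (ℓ * Real.pi * s))^2))
      = (ε * ℓ^2 * Real.pi^2 + lam^2 * c) / 2 := by
  have h1 : ∀ s : ℝ,
      (ε * (deriv (fun t : ℝ => Real.cos (ℓ * Real.pi * t)) s)^2
        + lam^2 * c * (Real.cos (ℓ * Real.pi * s))^2)
      = (ε * (ℓ:ℝ)^2 * Real.pi^2) * Real.sin (ℓ * Real.pi * s) ^ 2
        + (lam^2 * c) * Real.cos (ℓ * Real.pi * s) ^ 2 := by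
    intro s
    rw [deriv_cos_mul]
    ring
  rw [intervalIntegral.integral_congr (fun s _ => h1 s)]
  rw [intervalIntegral.integral_add, intervalIntegral.integral_const_mul,
    intervalIntegral.integral_const_mul, sin_sq_int ℓ hl, cos_sq_int ℓ hl]
  · ring
  · exact (Continuous.intervalIntegrable (by continuity) 0 1)
  · exact (Continuous.intervalIntegrable (by continuity) 0 1)

/-- For the zero-mean test functions `η_ℓ(s) = cos(ℓπs)` the second
variation at the trivial solution equals `(εℓ²π² + λ²c)/2` (with `c := Ẅ*(1/λ)`), which
is negative when `εℓ²π²/λ² < -c`; hence the trivial solution is unstable for `λ > λ₁`. -/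
theorem second_variation_negative_cosine
    (ε lam c : ℝ) (hε : 0 < ε) (hlam : 0 < lam) :
    (∀ ℓ : ℕ, 1 ≤ ℓ →
      (∫ s in (0:ℝ)..1, Real.cos (ℓ * Real.pi * s)) = 0 ∧
      (∫ s in (0:ℝ)..1,
          (ε * (deriv (fun t : ℝ => Real.cos (ℓ * Real.pi * t)) s)^2
            + lam^2 * c * (Real.cos (ℓ * Real.pi * s))^2))
        = (ε * ℓ^2 * Real.pi^2 + lam^2 * c) / 2 ∧
      (ε * ℓ^2 * Real.pi^2 / lam^2 < -c →
        (∫ s in (0:ℝ)..1,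
          (ε * (deriv (fun t : ℝ => Real.cos (ℓ * Real.pi * t)) s)^2
            + lam^2 * c * (Real.cos (ℓ * Real.pi * s))^2)) < 0)) ∧
    (ε * Real.pi^2 / lam^2 < -c →
      ∃ η η' : ℝ → ℝ,
        (∀ s ∈ Set.Icc (0:ℝ) 1, HasDerivAt η (η' s) s) ∧
        (∫ s in (0:ℝ)..1, η s) = 0 ∧
        (∫ s in (0:ℝ)..1,
          (ε * (η' s)^2 + lam^2 * c * (η s)^2)) < 0) := by
  have hneg : ∀ ℓ : ℕ, 1 ≤ ℓ → ε * ℓ^2 * Real.pi^2 / lam^2 < -c →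
      (ε * ℓ^2 * Real.pi^2 + lam^2 * c) / 2 < 0 := by
    intro ℓ hl h
    have hl2 : (0:ℝ) < lam ^ 2 := by positivity
    have := (div_lt_iff₀ hl2).mp h
    nlinarith
  refine ⟨fun ℓ hl => ⟨cos_int_zero ℓ hl, key_int ε lam c ℓ hl, fun h => ?_⟩, fun h => ?_⟩
  · rw [key_int ε lam c ℓ hl]; exact hneg ℓ hl h
  · refine ⟨fun s => Real.cos (Real.pi * s),
      fun s => deriv (fun t : ℝ => Real.cos (Real.pi * t)) s, fun s _ => ?_, ?_, ?_⟩
    · simp only [deriv_cos_mul]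
      exact hasDerivAt_cos_mul Real.pi s
    · have := cos_int_zero 1 le_rfl
      simpa using this
    · have := key_int ε lam c 1 le_rfl
      have h2 := hneg 1 le_rfl (by simpa using h)
      simp only [Nat.cast_one, one_mul] at this ⊢
      rw [this]
      simpa using h2
end
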